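/- Let M > 0 and let α, N₀, q, V > 0. Define N_M(v,t) = N(v_M, t) where v_M(s) = sgn(v(s))min(|v(s)|, M) is the pointwise cutoff and N is given by the explicit variation-of-constants formula for the pore density ODE. Then there exists L = L(M) such that for all continuous v₁, v₂ : [0,T] → ℝ and all t ∈ [0,T], |N_M(v₁,t) − N_M(v₂,t)|² ≤ L ∫₀ᵗ |v₁(s) − v₂(s)|² ds. -/

import Mathlib

open MeasureTheory intervalIntegral

/-- Pore density from the Neu–Krassowska model, given by the
variation-of-constants formula. -/
noncomputable def Npore (α N₀ q V : ℝ) (v : ℝ → ℝ) (t : ℝ) : ℝ :=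
  Real.exp (-∫ τ in (0:ℝ)..t, (α / N₀) * Real.exp ((1 - q) * (v τ / V) ^ 2)) * N₀ +
    ∫ s in (0:ℝ)..t, α * Real.exp ((v s / V) ^ 2) *
      Real.exp (-∫ τ in s..t, (α / N₀) * Real.exp ((1 - q) * (v τ / V) ^ 2))

/-- The cutoff at level `M`: `v_M = sgn(v) · min(|v|, M)`. -/
noncomputable def cut (M v : ℝ) : ℝ := Real.sign v * min |v| M

lemma cut_eq {M : ℝ} (hM : 0 ≤ M) (x : ℝ) : cut M x = max (-M) (min x M) := by
  unfold cut
  rcases lt_trichotomy x 0 with h | h | h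
  · rw [Real.sign_of_neg h, abs_of_neg h]
    rcases le_total (-x) M with h2 | h2
    · rw [min_eq_left h2, min_eq_left (by linarith), max_eq_right (by linarith)]; ring
    · rw [min_eq_right h2, min_eq_left (by linarith), max_eq_left (by linarith)]; ring
  · subst h; simp [Real.sign_zero, max_eq_right (neg_nonpos_of_nonneg hM), min_eq_left hM]
  · rw [Real.sign_of_pos h, abs_of_pos h, one_mul, max_eq_right]
    exact le_trans (by linarith) (le_min (le_of_lt h) hM)

lemma cut_abs_le {M : ℝ} (hM : 0 ≤ M) (x : ℝ) : |cut M x| ≤ M := by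
  rw [cut_eq hM, abs_le]
  exact ⟨le_max_left _ _, max_le (by linarith) (min_le_right _ _)⟩

lemma cut_lip {M : ℝ} (hM : 0 ≤ M) (x y : ℝ) : |cut M x - cut M y| ≤ |x - y| := by
  rw [cut_eq hM, cut_eq hM, max_comm _ (min x M), max_comm _ (min y M)]
  calc |max (min x M) (-M) - max (min y M) (-M)| ≤ |min x M - min y M| :=
        abs_max_sub_max_le_abs _ _ _
    _ ≤ max |x - y| |M - M| := abs_min_sub_min_le_max _ _ _ _
    _ = |x - y| := by simp

lemma cut_cont {M : ℝ} (hM : 0 ≤ M) {v : ℝ → ℝ} (hv : Continuous v) :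
    Continuous fun s => cut M (v s) := by
  have : (fun s => cut M (v s)) = fun s => max (-M) (min (v s) M) :=
    funext fun s => cut_eq hM (v s)
  rw [this]; fun_prop

lemma exp_lip {a b c : ℝ} (ha : a ≤ c) (hb : b ≤ c) :
    |Real.exp a - Real.exp b| ≤ Real.exp c * |a - b| := by
  wlog hab : b ≤ a generalizing a b
  · rw [abs_sub_comm, abs_sub_comm a b]; exact this hb ha (le_of_not_ge hab)
  rw [abs_of_nonneg (sub_nonneg.2 (Real.exp_le_exp.2 hab)), abs_of_nonneg (sub_nonneg.2 hab)]
  have h2 : Real.exp b = Real.exp a * Real.exp (b - a) := by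
    rw [← Real.exp_add]; ring_nf
  nlinarith [Real.add_one_le_exp (b - a), Real.exp_pos a, Real.exp_le_exp.2 ha]

lemma cs_int {u : ℝ → ℝ} (hu : Continuous u) {t : ℝ} (ht : 0 ≤ t) :
    (∫ s in (0:ℝ)..t, |u s|) ^ 2 ≤ t * ∫ s in (0:ℝ)..t, (u s) ^ 2 := by
  rcases eq_or_lt_of_le ht with h | h
  · simp [← h]
  set I := ∫ s in (0:ℝ)..t, |u s| with hI
  set c : ℝ := I / t with hc
  have hu1 : IntervalIntegrable (fun s => |u s|) volume 0 t :=
    (hu.abs).intervalIntegrable _ _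
  have hu2 : IntervalIntegrable (fun s => (u s) ^ 2) volume 0 t :=
    (hu.pow 2).intervalIntegrable _ _
  have h0 : (0:ℝ) ≤ ∫ s in (0:ℝ)..t, (|u s| - c) ^ 2 :=
    integral_nonneg (le_of_lt h) fun x _ => sq_nonneg _
  have hexp : ∫ s in (0:ℝ)..t, (|u s| - c) ^ 2
      = (∫ s in (0:ℝ)..t, (u s) ^ 2) - 2 * c * I + c ^ 2 * t := by
    have h1 : ∀ s, (|u s| - c) ^ 2 = (u s) ^ 2 - (2 * c) * |u s| + c ^ 2 := by
      intro s; rw [sub_sq, sq_abs]; ring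
    simp_rw [h1]
    rw [integral_add (hu2.sub (hu1.const_mul _)) intervalIntegrable_const,
      integral_sub hu2 (hu1.const_mul _), intervalIntegral.integral_const_mul, intervalIntegral.integral_const]
    simp only [← hI, smul_eq_mul, sub_zero]; ring
  rw [hexp, hc] at h0
  have ht' : t ≠ 0 := ne_of_gt h
  have key : I ^ 2 / t ≤ ∫ s in (0:ℝ)..t, (u s) ^ 2 := by
    have h3 : 2 * (I / t) * I - (I / t) ^ 2 * t = I ^ 2 / t := by field_simp; ring
    linarith [h0, h3]
  calc I ^ 2 = t * (I ^ 2 / t) := by field_simp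
    _ ≤ t * ∫ s in (0:ℝ)..t, (u s) ^ 2 := mul_le_mul_of_nonneg_left key ht

lemma sq_diff_le {x y M : ℝ} (hx : |x| ≤ M) (hy : |y| ≤ M) :
    |x ^ 2 - y ^ 2| ≤ 2 * M * |x - y| := by
  have h : x ^ 2 - y ^ 2 = (x + y) * (x - y) := by ring
  rw [h, abs_mul]
  have : |x + y| ≤ 2 * M := (abs_add_le x y).trans (by linarith)
  exact mul_le_mul_of_nonneg_right this (abs_nonneg _)

lemma sq_div_le {z M V : ℝ} (hV : 0 < V) (hz : |z| ≤ M) : (z / V) ^ 2 ≤ (M / V) ^ 2 := by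
  rw [div_pow, div_pow]
  have h2 : z ^ 2 ≤ M ^ 2 := sq_le_sq' (neg_le_of_abs_le hz) (le_of_abs_le hz)
  exact div_le_div_of_nonneg_right h2 (pow_pos hV 2).le

lemma gdiff_aux {M V : ℝ} (c : ℝ) (hV : 0 < V) {x y : ℝ} (hx : |x| ≤ M) (hy : |y| ≤ M) :
    |Real.exp (c * (x / V) ^ 2) - Real.exp (c * (y / V) ^ 2)| ≤
      Real.exp (|c| * (M / V) ^ 2) * (|c| * (2 * M / V ^ 2)) * |x - y| := by
  have h1 : c * (x / V) ^ 2 ≤ |c| * (M / V) ^ 2 :=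
    le_trans (mul_le_mul_of_nonneg_right (le_abs_self c) (sq_nonneg _))
      (mul_le_mul_of_nonneg_left (sq_div_le hV hx) (abs_nonneg c))
  have h2 : c * (y / V) ^ 2 ≤ |c| * (M / V) ^ 2 :=
    le_trans (mul_le_mul_of_nonneg_right (le_abs_self c) (sq_nonneg _))
      (mul_le_mul_of_nonneg_left (sq_div_le hV hy) (abs_nonneg c))
  have hmid : |(x / V) ^ 2 - (y / V) ^ 2| ≤ 2 * M / V ^ 2 * |x - y| := by
    have heq : (x / V) ^ 2 - (y / V) ^ 2 = (x ^ 2 - y ^ 2) / V ^ 2 := by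
      rw [div_pow, div_pow]; ring
    rw [heq, abs_div, abs_of_pos (pow_pos hV 2)]
    calc |x ^ 2 - y ^ 2| / V ^ 2 ≤ 2 * M * |x - y| / V ^ 2 :=
          div_le_div_of_nonneg_right (sq_diff_le hx hy) (pow_pos hV 2).le
      _ = 2 * M / V ^ 2 * |x - y| := by ring
  calc |Real.exp (c * (x / V) ^ 2) - Real.exp (c * (y / V) ^ 2)|
      ≤ Real.exp (|c| * (M / V) ^ 2) * |c * (x / V) ^ 2 - c * (y / V) ^ 2| := exp_lip h1 h2
    _ = Real.exp (|c| * (M / V) ^ 2) * (|c| * |(x / V) ^ 2 - (y / V) ^ 2|) := by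
        rw [← mul_sub, abs_mul]
    _ ≤ Real.exp (|c| * (M / V) ^ 2) * (|c| * (2 * M / V ^ 2 * |x - y|)) :=
        mul_le_mul_of_nonneg_left
          (mul_le_mul_of_nonneg_left hmid (abs_nonneg c)) (Real.exp_pos _).le
    _ = Real.exp (|c| * (M / V) ^ 2) * (|c| * (2 * M / V ^ 2)) * |x - y| := by ring

set_option maxHeartbeats 1000000 in
lemma npore_diff_le (α N₀ q V M T : ℝ) (hα : 0 < α) (hN₀ : 0 < N₀) (hV : 0 < V)
    (hM : 0 < M) {t : ℝ} (ht0 : 0 ≤ t) (htT : t ≤ T)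
    (w₁ w₂ : ℝ → ℝ) (hw₁ : Continuous w₁) (hw₂ : Continuous w₂)
    (hb₁ : ∀ s, |w₁ s| ≤ M) (hb₂ : ∀ s, |w₂ s| ≤ M) :
    |Npore α N₀ q V w₁ t - Npore α N₀ q V w₂ t| ≤
      (N₀ * ((α / N₀) * (Real.exp (|1 - q| * (M / V) ^ 2) * (|1 - q| * (2 * M / V ^ 2))))
        + α * (Real.exp ((M / V) ^ 2) * (2 * M / V ^ 2))
        + T * (α * Real.exp ((M / V) ^ 2)) *
            ((α / N₀) * (Real.exp (|1 - q| * (M / V) ^ 2) * (|1 - q| * (2 * M / V ^ 2))))) *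
        ∫ s in (0:ℝ)..t, |w₁ s - w₂ s| := by
  simp only [Npore]
  set Cg : ℝ := (α / N₀) * (Real.exp (|1 - q| * (M / V) ^ 2) * (|1 - q| * (2 * M / V ^ 2)))
    with hCg
  set Cf : ℝ := α * (Real.exp ((M / V) ^ 2) * (2 * M / V ^ 2)) with hCf
  set F : ℝ := α * Real.exp ((M / V) ^ 2) with hF
  set g₁ : ℝ → ℝ := fun τ => (α / N₀) * Real.exp ((1 - q) * (w₁ τ / V) ^ 2) with hg₁
  set g₂ : ℝ → ℝ := fun τ => (α / N₀) * Real.exp ((1 - q) * (w₂ τ / V) ^ 2) with hg₂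
  have hg₁c : Continuous g₁ := by rw [hg₁]; fun_prop
  have hg₂c : Continuous g₂ := by rw [hg₂]; fun_prop
  have hgdc : Continuous fun τ => |g₁ τ - g₂ τ| := (hg₁c.sub hg₂c).abs
  set I : ℝ := ∫ s in (0:ℝ)..t, |w₁ s - w₂ s| with hI
  have hwc : Continuous fun s => |w₁ s - w₂ s| := (hw₁.sub hw₂).abs
  have hI0 : 0 ≤ I := integral_nonneg ht0 fun _ _ => abs_nonneg _
  have hCg0 : 0 ≤ Cg := by rw [hCg]; positivity
  have hCf0 : 0 ≤ Cf := by rw [hCf]; positivity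
  have hF0 : 0 ≤ F := by rw [hF]; positivity
  -- pointwise estimate on g
  have hgd : ∀ τ, |g₁ τ - g₂ τ| ≤ Cg * |w₁ τ - w₂ τ| := by
    intro τ
    have h := gdiff_aux (M := M) (V := V) (1 - q) hV (hb₁ τ) (hb₂ τ)
    calc |g₁ τ - g₂ τ|
        = (α / N₀) * |Real.exp ((1 - q) * (w₁ τ / V) ^ 2)
            - Real.exp ((1 - q) * (w₂ τ / V) ^ 2)| := by
          rw [hg₁, hg₂]; rw [← mul_sub, abs_mul, abs_of_pos (div_pos hα hN₀)]
      _ ≤ (α / N₀) * (Real.exp (|1 - q| * (M / V) ^ 2) * (|1 - q| * (2 * M / V ^ 2))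
            * |w₁ τ - w₂ τ|) := mul_le_mul_of_nonneg_left h (div_pos hα hN₀).le
      _ = Cg * |w₁ τ - w₂ τ| := by rw [hCg]; ring
  -- pointwise estimate on f
  have hfd : ∀ s, |α * Real.exp ((w₁ s / V) ^ 2) - α * Real.exp ((w₂ s / V) ^ 2)|
      ≤ Cf * |w₁ s - w₂ s| := by
    intro s
    have h := gdiff_aux (M := M) (V := V) 1 hV (hb₁ s) (hb₂ s)
    simp only [one_mul, abs_one] at h
    calc |α * Real.exp ((w₁ s / V) ^ 2) - α * Real.exp ((w₂ s / V) ^ 2)|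
        = α * |Real.exp ((w₁ s / V) ^ 2) - Real.exp ((w₂ s / V) ^ 2)| := by
          rw [← mul_sub, abs_mul, abs_of_pos hα]
      _ ≤ α * (Real.exp ((M / V) ^ 2) * (2 * M / V ^ 2) * |w₁ s - w₂ s|) :=
          mul_le_mul_of_nonneg_left h hα.le
      _ = Cf * |w₁ s - w₂ s| := by rw [hCf]; ring
  have hfb : ∀ s, α * Real.exp ((w₁ s / V) ^ 2) ≤ F := by
    intro s
    rw [hF]
    exact mul_le_mul_of_nonneg_left
      (Real.exp_le_exp.2 (sq_div_le hV (hb₁ s))) hα.le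
  -- estimate on difference of the integrals of g over s..t
  have hAd : ∀ s, 0 ≤ s → s ≤ t →
      |(∫ τ in s..t, g₁ τ) - ∫ τ in s..t, g₂ τ| ≤ Cg * I := by
    intro s hs0 hst
    rw [← integral_sub (hg₁c.intervalIntegrable s t) (hg₂c.intervalIntegrable s t)]
    calc |∫ τ in s..t, (g₁ τ - g₂ τ)| ≤ ∫ τ in s..t, |g₁ τ - g₂ τ| :=
          abs_integral_le_integral_abs hst
      _ ≤ ∫ τ in (0:ℝ)..t, |g₁ τ - g₂ τ| := by
          have hsplit : (∫ τ in (0:ℝ)..s, |g₁ τ - g₂ τ|)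
              + ∫ τ in s..t, |g₁ τ - g₂ τ| = ∫ τ in (0:ℝ)..t, |g₁ τ - g₂ τ| :=
            integral_add_adjacent_intervals (hgdc.intervalIntegrable 0 s)
              (hgdc.intervalIntegrable s t)
          have hpos : 0 ≤ ∫ τ in (0:ℝ)..s, |g₁ τ - g₂ τ| :=
            integral_nonneg hs0 fun _ _ => abs_nonneg _
          linarith
      _ ≤ ∫ τ in (0:ℝ)..t, Cg * |w₁ τ - w₂ τ| :=
          integral_mono_on ht0 (hgdc.intervalIntegrable 0 t)
            ((continuous_const.mul hwc).intervalIntegrable 0 t) fun τ _ => hgd τ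
      _ = Cg * I := by rw [hI, intervalIntegral.integral_const_mul]
  have hA10 : ∀ s, s ≤ t → 0 ≤ ∫ τ in s..t, g₁ τ := fun s hst =>
    integral_nonneg hst fun τ _ => by simp only [hg₁]; positivity
  have hA20 : ∀ s, s ≤ t → 0 ≤ ∫ τ in s..t, g₂ τ := fun s hst =>
    integral_nonneg hst fun τ _ => by simp only [hg₂]; positivity
  -- first term
  have h1st : |Real.exp (-∫ τ in (0:ℝ)..t, g₁ τ) * N₀
      - Real.exp (-∫ τ in (0:ℝ)..t, g₂ τ) * N₀| ≤ N₀ * (Cg * I) := by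
    rw [← sub_mul, abs_mul, abs_of_pos hN₀, mul_comm N₀ (Cg * I)]
    refine mul_le_mul_of_nonneg_right ?_ hN₀.le
    have hlip := exp_lip (c := 0) (neg_nonpos.2 (hA10 0 ht0)) (neg_nonpos.2 (hA20 0 ht0))
    have hswap : |(-∫ τ in (0:ℝ)..t, g₁ τ) - -∫ τ in (0:ℝ)..t, g₂ τ|
        = |(∫ τ in (0:ℝ)..t, g₁ τ) - ∫ τ in (0:ℝ)..t, g₂ τ| := by
      rw [neg_sub_neg, abs_sub_comm]
    rw [Real.exp_zero, one_mul, hswap] at hlip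
    exact hlip.trans (hAd 0 le_rfl ht0)
  -- second term
  set h₁ : ℝ → ℝ := fun s => α * Real.exp ((w₁ s / V) ^ 2)
    * Real.exp (-∫ τ in s..t, g₁ τ) with hh₁
  set h₂ : ℝ → ℝ := fun s => α * Real.exp ((w₂ s / V) ^ 2)
    * Real.exp (-∫ τ in s..t, g₂ τ) with hh₂
  have hAc : ∀ (g : ℝ → ℝ), Continuous g → Continuous fun s => ∫ τ in s..t, g τ := by
    intro g hg
    have hprim : Continuous fun s => ∫ τ in (0:ℝ)..s, g τ :=
      intervalIntegral.continuous_primitive (fun a b => hg.intervalIntegrable a b) 0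
    have heq : ∀ s, (∫ τ in (0:ℝ)..t, g τ) - (∫ τ in (0:ℝ)..s, g τ) = ∫ τ in s..t, g τ :=
      fun s => integral_interval_sub_left (hg.intervalIntegrable 0 t)
        (hg.intervalIntegrable 0 s)
    exact (continuous_const.sub hprim).congr heq
  have hh₁c : Continuous h₁ := by
    rw [hh₁]
    exact (continuous_const.mul ((hw₁.div_const V).pow 2).rexp).mul ((hAc g₁ hg₁c).neg.rexp)
  have hh₂c : Continuous h₂ := by
    rw [hh₂]
    exact (continuous_const.mul ((hw₂.div_const V).pow 2).rexp).mul ((hAc g₂ hg₂c).neg.rexp)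
  have hhd : ∀ s ∈ Set.Icc (0:ℝ) t, |h₁ s - h₂ s| ≤ Cf * |w₁ s - w₂ s| + F * (Cg * I) := by
    rintro s ⟨hs0, hst⟩
    have hA₁0 : 0 ≤ ∫ τ in s..t, g₁ τ := hA10 s hst
    have hA₂0 : 0 ≤ ∫ τ in s..t, g₂ τ := hA20 s hst
    have e1 : Real.exp (-∫ τ in s..t, g₂ τ) ≤ 1 := by
      have := Real.exp_le_exp.2 (neg_nonpos.2 hA₂0)
      simpa using this
    have e2 : |Real.exp (-∫ τ in s..t, g₁ τ) - Real.exp (-∫ τ in s..t, g₂ τ)|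
        ≤ |(∫ τ in s..t, g₁ τ) - ∫ τ in s..t, g₂ τ| := by
      have hlip := exp_lip (c := 0) (neg_nonpos.2 hA₁0) (neg_nonpos.2 hA₂0)
      have hswap : |(-∫ τ in s..t, g₁ τ) - -∫ τ in s..t, g₂ τ|
          = |(∫ τ in s..t, g₁ τ) - ∫ τ in s..t, g₂ τ| := by
        rw [neg_sub_neg, abs_sub_comm]
      rwa [Real.exp_zero, one_mul, hswap] at hlip
    calc |h₁ s - h₂ s|
        = |(α * Real.exp ((w₁ s / V) ^ 2))
              * (Real.exp (-∫ τ in s..t, g₁ τ) - Real.exp (-∫ τ in s..t, g₂ τ))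
            + (α * Real.exp ((w₁ s / V) ^ 2) - α * Real.exp ((w₂ s / V) ^ 2))
              * Real.exp (-∫ τ in s..t, g₂ τ)| := by
          rw [hh₁, hh₂]; congr 1; ring
      _ ≤ |α * Real.exp ((w₁ s / V) ^ 2)|
            * |Real.exp (-∫ τ in s..t, g₁ τ) - Real.exp (-∫ τ in s..t, g₂ τ)|
          + |α * Real.exp ((w₁ s / V) ^ 2) - α * Real.exp ((w₂ s / V) ^ 2)|
            * |Real.exp (-∫ τ in s..t, g₂ τ)| := by
          refine (abs_add_le _ _).trans (le_of_eq ?_)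
          simp only [abs_mul]
      _ ≤ F * (Cg * I) + Cf * |w₁ s - w₂ s| := by
          have hb : |α * Real.exp ((w₁ s / V) ^ 2)| ≤ F := by
            rw [abs_of_pos (by positivity)]; exact hfb s
          have he2' := e2.trans (hAd s hs0 hst)
          have hexp2 : |Real.exp (-∫ τ in s..t, g₂ τ)| ≤ 1 := by
            rw [abs_of_pos (Real.exp_pos _)]; exact e1
          have t1 : |α * Real.exp ((w₁ s / V) ^ 2)|
              * |Real.exp (-∫ τ in s..t, g₁ τ) - Real.exp (-∫ τ in s..t, g₂ τ)|
              ≤ F * (Cg * I) :=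
            mul_le_mul hb he2' (abs_nonneg _) hF0
          have t2 : |α * Real.exp ((w₁ s / V) ^ 2) - α * Real.exp ((w₂ s / V) ^ 2)|
              * |Real.exp (-∫ τ in s..t, g₂ τ)| ≤ Cf * |w₁ s - w₂ s| := by
            calc _ ≤ |α * Real.exp ((w₁ s / V) ^ 2) - α * Real.exp ((w₂ s / V) ^ 2)| * 1 :=
                  mul_le_mul_of_nonneg_left hexp2 (abs_nonneg _)
              _ = _ := mul_one _
              _ ≤ Cf * |w₁ s - w₂ s| := hfd s
          linarith
      _ = Cf * |w₁ s - w₂ s| + F * (Cg * I) := by ring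
  have h2nd : |(∫ s in (0:ℝ)..t, h₁ s) - ∫ s in (0:ℝ)..t, h₂ s|
      ≤ Cf * I + T * (F * (Cg * I)) := by
    rw [← integral_sub (hh₁c.intervalIntegrable 0 t) (hh₂c.intervalIntegrable 0 t)]
    calc |∫ s in (0:ℝ)..t, (h₁ s - h₂ s)| ≤ ∫ s in (0:ℝ)..t, |h₁ s - h₂ s| :=
          abs_integral_le_integral_abs ht0
      _ ≤ ∫ s in (0:ℝ)..t, (Cf * |w₁ s - w₂ s| + F * (Cg * I)) :=
          integral_mono_on ht0 ((hh₁c.sub hh₂c).abs.intervalIntegrable 0 t)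
            (((continuous_const.mul hwc).add continuous_const).intervalIntegrable 0 t) hhd
      _ = Cf * I + t * (F * (Cg * I)) := by
          rw [integral_add ((hwc.intervalIntegrable 0 t).const_mul Cf)
            intervalIntegrable_const, intervalIntegral.integral_const_mul,
            intervalIntegral.integral_const, ← hI]
          simp only [smul_eq_mul, sub_zero]
      _ ≤ Cf * I + T * (F * (Cg * I)) := by
          have : 0 ≤ F * (Cg * I) := by positivity
          nlinarith
  calc |(Real.exp (-∫ τ in (0:ℝ)..t, g₁ τ) * N₀ + ∫ s in (0:ℝ)..t, h₁ s)
        - (Real.exp (-∫ τ in (0:ℝ)..t, g₂ τ) * N₀ + ∫ s in (0:ℝ)..t, h₂ s)|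
      = |(Real.exp (-∫ τ in (0:ℝ)..t, g₁ τ) * N₀ - Real.exp (-∫ τ in (0:ℝ)..t, g₂ τ) * N₀)
          + ((∫ s in (0:ℝ)..t, h₁ s) - ∫ s in (0:ℝ)..t, h₂ s)| := by congr 1; ring
    _ ≤ |Real.exp (-∫ τ in (0:ℝ)..t, g₁ τ) * N₀ - Real.exp (-∫ τ in (0:ℝ)..t, g₂ τ) * N₀|
        + |(∫ s in (0:ℝ)..t, h₁ s) - ∫ s in (0:ℝ)..t, h₂ s| := abs_add_le _ _
    _ ≤ N₀ * (Cg * I) + (Cf * I + T * (F * (Cg * I))) := add_le_add h1st h2nd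
    _ = (N₀ * Cg + Cf + T * F * Cg) * I := by ring

theorem stmt6 (α N₀ q V T M : ℝ) (hα : 0 < α) (hN₀ : 0 < N₀) (hq : 0 < q) (hV : 0 < V)
    (hT : 0 < T) (hM : 0 < M) :
    ∃ L > (0:ℝ), ∀ v₁ v₂ : ℝ → ℝ, Continuous v₁ → Continuous v₂ →
      ∀ t ∈ Set.Icc (0:ℝ) T,
        |Npore α N₀ q V (fun s => cut M (v₁ s)) t -
            Npore α N₀ q V (fun s => cut M (v₂ s)) t| ^ 2 ≤
          L * ∫ s in (0:ℝ)..t, |v₁ s - v₂ s| ^ 2 := by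
  set Cg : ℝ := (α / N₀) * (Real.exp (|1 - q| * (M / V) ^ 2) * (|1 - q| * (2 * M / V ^ 2)))
    with hCg
  set Cf : ℝ := α * (Real.exp ((M / V) ^ 2) * (2 * M / V ^ 2)) with hCf
  set F : ℝ := α * Real.exp ((M / V) ^ 2) with hF
  set K : ℝ := N₀ * Cg + Cf + T * F * Cg with hK
  have hCg0 : 0 ≤ Cg := by rw [hCg]; positivity
  have hCf0 : 0 < Cf := by rw [hCf]; positivity
  have hF0 : 0 ≤ F := by rw [hF]; positivity
  have hK0 : 0 < K := by
    rw [hK]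
    have h1 : 0 ≤ N₀ * Cg := mul_nonneg hN₀.le hCg0
    have h2 : 0 ≤ T * F * Cg := mul_nonneg (mul_nonneg hT.le hF0) hCg0
    linarith
  refine ⟨K ^ 2 * T, by positivity, ?_⟩
  intro v₁ v₂ hv₁ hv₂ t ht
  obtain ⟨ht0, htT⟩ := ht
  have hw₁c : Continuous fun s => cut M (v₁ s) := cut_cont hM.le hv₁
  have hw₂c : Continuous fun s => cut M (v₂ s) := cut_cont hM.le hv₂
  have key := npore_diff_le α N₀ q V M T hα hN₀ hV hM ht0 htT _ _ hw₁c hw₂c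
    (fun s => cut_abs_le hM.le (v₁ s)) (fun s => cut_abs_le hM.le (v₂ s))
  rw [← hCg, ← hCf, ← hF, ← hK] at key
  have hwle : (∫ s in (0:ℝ)..t, |cut M (v₁ s) - cut M (v₂ s)|)
      ≤ ∫ s in (0:ℝ)..t, |v₁ s - v₂ s| :=
    integral_mono_on ht0 ((hw₁c.sub hw₂c).abs.intervalIntegrable 0 t)
      ((hv₁.sub hv₂).abs.intervalIntegrable 0 t) fun s _ => cut_lip hM.le _ _
  have hIw0 : 0 ≤ ∫ s in (0:ℝ)..t, |cut M (v₁ s) - cut M (v₂ s)| :=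
    integral_nonneg ht0 fun _ _ => abs_nonneg _
  have hIv0 : 0 ≤ ∫ s in (0:ℝ)..t, |v₁ s - v₂ s| :=
    integral_nonneg ht0 fun _ _ => abs_nonneg _
  have hsq0 : 0 ≤ ∫ s in (0:ℝ)..t, (v₁ s - v₂ s) ^ 2 :=
    integral_nonneg ht0 fun _ _ => sq_nonneg _
  have step1 : |Npore α N₀ q V (fun s => cut M (v₁ s)) t -
      Npore α N₀ q V (fun s => cut M (v₂ s)) t| ≤ K * ∫ s in (0:ℝ)..t, |v₁ s - v₂ s| :=
    key.trans (mul_le_mul_of_nonneg_left hwle hK0.le)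
  calc |Npore α N₀ q V (fun s => cut M (v₁ s)) t -
        Npore α N₀ q V (fun s => cut M (v₂ s)) t| ^ 2
      ≤ (K * ∫ s in (0:ℝ)..t, |v₁ s - v₂ s|) ^ 2 :=
        pow_le_pow_left₀ (abs_nonneg _) step1 2
    _ = K ^ 2 * (∫ s in (0:ℝ)..t, |v₁ s - v₂ s|) ^ 2 := by ring
    _ ≤ K ^ 2 * (t * ∫ s in (0:ℝ)..t, (v₁ s - v₂ s) ^ 2) :=
        mul_le_mul_of_nonneg_left (cs_int (hv₁.sub hv₂) ht0) (sq_nonneg K)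
    _ ≤ K ^ 2 * (T * ∫ s in (0:ℝ)..t, (v₁ s - v₂ s) ^ 2) := by
        have h := mul_le_mul_of_nonneg_right htT hsq0
        exact mul_le_mul_of_nonneg_left h (sq_nonneg K)
    _ = K ^ 2 * T * ∫ s in (0:ℝ)..t, |v₁ s - v₂ s| ^ 2 := by
        simp_rw [sq_abs]; ring
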